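/- Composition of conditional probability ratios: let (z_1,...,z_T) and (z'_1,...,z'_T) be two sequences of random variables whose joint laws agree on all conditionals except the t-th, and suppose the t-th conditionals satisfy P[z_t ∈ U | z_{1:t−1} ∈ U^{1:t−1}] ≤ e^ε · P[z'_t ∈ U | z'_{1:t−1} ∈ U^{1:t−1}] for all measurable U and measurable prefix events U^{1:t−1}. Then for any product measurable set U^{1:T}, P[z_{1:T} ∈ U^{1:T}] ≤ e^ε · P[z'_{1:T} ∈ U^{1:T}]. -/

import Mathlib

open MeasureTheory

/-- Chain-rule composition of conditional probability ratios: if two output sequences have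
the same prefix laws and the same suffix conditionals, and the `t`-th conditionals differ
by a factor at most `e^ε`, then the joint cylinder probabilities differ by at most `e^ε`. -/
theorem conditional_ratio_composition {Ω Z : Type*} [MeasurableSpace Ω]
    (μ : Measure Ω) [IsProbabilityMeasure μ]
    (T : ℕ) (t : Fin T) (ε : ℝ) (hε : 0 ≤ ε)
    (z z' : Fin T → Ω → Z)
    (hpre : ∀ U : Fin T → Set Z,
      μ {ω | ∀ i : Fin T, i < t → z i ω ∈ U i}
        = μ {ω | ∀ i : Fin T, i < t → z' i ω ∈ U i})
    (hstep : ∀ U : Fin T → Set Z,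
      μ {ω | ∀ i : Fin T, i ≤ t → z i ω ∈ U i} / μ {ω | ∀ i : Fin T, i < t → z i ω ∈ U i}
        ≤ ENNReal.ofReal (Real.exp ε) *
          (μ {ω | ∀ i : Fin T, i ≤ t → z' i ω ∈ U i}
            / μ {ω | ∀ i : Fin T, i < t → z' i ω ∈ U i}))
    (hsuf : ∀ U : Fin T → Set Z,
      μ {ω | ∀ i : Fin T, z i ω ∈ U i} / μ {ω | ∀ i : Fin T, i ≤ t → z i ω ∈ U i}
        = μ {ω | ∀ i : Fin T, z' i ω ∈ U i}
            / μ {ω | ∀ i : Fin T, i ≤ t → z' i ω ∈ U i}) :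
    ∀ U : Fin T → Set Z,
      μ {ω | ∀ i : Fin T, z i ω ∈ U i}
        ≤ ENNReal.ofReal (Real.exp ε) * μ {ω | ∀ i : Fin T, z' i ω ∈ U i} := by

  intro U
  have hC := hpre U
  have hB := hstep U
  have hA := hsuf U
  set e := ENNReal.ofReal (Real.exp ε) with he
  set a := μ {ω | ∀ i : Fin T, z i ω ∈ U i} with haa
  set b := μ {ω | ∀ i : Fin T, i ≤ t → z i ω ∈ U i} with hbb
  set c := μ {ω | ∀ i : Fin T, i < t → z i ω ∈ U i} with hcc
  set a' := μ {ω | ∀ i : Fin T, z' i ω ∈ U i} with haa'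
  set b' := μ {ω | ∀ i : Fin T, i ≤ t → z' i ω ∈ U i} with hbb'
  set c' := μ {ω | ∀ i : Fin T, i < t → z' i ω ∈ U i} with hcc'
  have hab : a ≤ b := measure_mono (fun ω h i _ => h i)
  have hbc : b ≤ c := measure_mono (fun ω h i hi => h i hi.le)
  have ha'b' : a' ≤ b' := measure_mono (fun ω h i _ => h i)
  have hb'c' : b' ≤ c' := measure_mono (fun ω h i hi => h i hi.le)
  have hbt : b ≠ ⊤ := (measure_lt_top μ _).ne
  have hct : c ≠ ⊤ := (measure_lt_top μ _).ne
  have hb't : b' ≠ ⊤ := (measure_lt_top μ _).ne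
  have hc't : c' ≠ ⊤ := (measure_lt_top μ _).ne
  by_cases h0 : a = 0
  · simp [h0]
  · have hb0 : b ≠ 0 := fun h => h0 (le_antisymm (h ▸ hab) zero_le)
    have hc0 : c ≠ 0 := fun h => hb0 (le_antisymm (h ▸ hbc) zero_le)
    have hdiv_pos : a / b ≠ 0 := (ENNReal.div_pos h0 hbt).ne'
    have ha'0 : a' ≠ 0 := by
      intro h
      rw [hA, h, ENNReal.zero_div] at hdiv_pos
      exact hdiv_pos rfl
    have hb'0 : b' ≠ 0 := fun h => ha'0 (le_antisymm (h ▸ ha'b') zero_le)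
    have hc'0 : c' ≠ 0 := fun h => hb'0 (le_antisymm (h ▸ hb'c') zero_le)
    calc a = (a / b) * ((b / c) * c) := by
            rw [ENNReal.div_mul_cancel hc0 hct, ENNReal.div_mul_cancel hb0 hbt]
      _ = (a' / b') * ((b / c) * c') := by rw [hA, hC]
      _ ≤ (a' / b') * ((e * (b' / c')) * c') := by gcongr
      _ = e * ((a' / b') * ((b' / c') * c')) := by ring
      _ = e * a' := by
            rw [ENNReal.div_mul_cancel hc'0 hc't, ENNReal.div_mul_cancel hb'0 hb't]
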